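/- For every real β with |β| ≤ 1 and every natural p ≥ 0, ∫₀¹ (log x)^p · log(1-βx) / x dx = (-1)^{p+1} p! Li_{p+2}(β). -/

import Mathlib

open MeasureTheory Real

noncomputable def Li (q : ℕ) (x : ℝ) : ℝ := ∑' n : ℕ, x ^ (n + 1) / ((n : ℝ) + 1) ^ q

lemma image_exp_neg : (fun t : ℝ => Real.exp (-t)) '' Set.Ioi 0 = Set.Ioo 0 1 := by
  ext x
  constructor
  · rintro ⟨t, ht, rfl⟩
    exact ⟨Real.exp_pos _, Real.exp_lt_one_iff.mpr (by simpa using ht)⟩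
  · rintro ⟨hx0, hx1⟩
    exact ⟨-Real.log x, by simpa using Real.log_neg hx0 hx1, by simp [Real.exp_log hx0]⟩

lemma key_integrable (n p : ℕ) :
    IntegrableOn (fun x : ℝ => x ^ n * (-Real.log x) ^ p) (Set.Ioo 0 1) := by
  have hderiv : ∀ t ∈ Set.Ioi (0:ℝ), HasDerivWithinAt (fun t : ℝ => Real.exp (-t))
      (-Real.exp (-t)) (Set.Ioi 0) t := by
    intro t ht
    simpa [Function.comp_def] using ((Real.hasDerivAt_exp (-t)).comp t (hasDerivAt_neg t)).hasDerivWithinAt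
  have hinj : Set.InjOn (fun t : ℝ => Real.exp (-t)) (Set.Ioi 0) :=
    fun a _ b _ hab => by simpa using Real.exp_injective hab
  rw [← image_exp_neg,
    integrableOn_image_iff_integrableOn_abs_deriv_smul measurableSet_Ioi hderiv hinj]
  have hbound : IntegrableOn (fun t : ℝ => Real.exp (-t) * t ^ (((p:ℝ)+1) - 1)) (Set.Ioi 0) :=
    Real.GammaIntegral_convergent (by positivity)
  apply Integrable.mono' hbound
  · exact Continuous.aestronglyMeasurable (by continuity)
  · filter_upwards [ae_restrict_mem measurableSet_Ioi] with t ht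
    rw [Set.mem_Ioi] at ht
    have h2 : |Real.exp (-t) ^ n * (-Real.log (Real.exp (-t))) ^ p| = Real.exp (-t) ^ n * t ^ p := by
      rw [Real.log_exp, neg_neg, abs_of_nonneg (by positivity)]
    rw [Real.norm_eq_abs, smul_eq_mul, abs_mul, abs_abs, abs_neg, abs_of_pos (Real.exp_pos _), h2]
    have h3 : t ^ (((p:ℝ)+1) - 1) = t ^ p := by
      rw [add_sub_cancel_right, Real.rpow_natCast]
    rw [h3]
    have h4 : Real.exp (-t) ^ n ≤ 1 :=
      pow_le_one₀ (Real.exp_pos _).le (Real.exp_le_one_iff.mpr (by linarith))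
    calc Real.exp (-t) * (Real.exp (-t) ^ n * t ^ p)
        ≤ Real.exp (-t) * (1 * t ^ p) := by
          apply mul_le_mul_of_nonneg_left
            (by apply mul_le_mul_of_nonneg_right h4 (by positivity)) (Real.exp_pos _).le
      _ = Real.exp (-t) * t ^ p := by ring

lemma key_integral (n p : ℕ) :
    ∫ x in Set.Ioo (0:ℝ) 1, x ^ n * (-Real.log x) ^ p
      = (p.factorial : ℝ) / ((n:ℝ) + 1) ^ (p + 1) := by
  have hderiv : ∀ t ∈ Set.Ioi (0:ℝ), HasDerivWithinAt (fun t : ℝ => Real.exp (-t))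
      (-Real.exp (-t)) (Set.Ioi 0) t := by
    intro t ht
    simpa [Function.comp_def] using ((Real.hasDerivAt_exp (-t)).comp t (hasDerivAt_neg t)).hasDerivWithinAt
  have hinj : Set.InjOn (fun t : ℝ => Real.exp (-t)) (Set.Ioi 0) :=
    fun a _ b _ hab => by simpa using Real.exp_injective hab
  rw [← image_exp_neg,
    integral_image_eq_integral_abs_deriv_smul measurableSet_Ioi hderiv hinj]
  have heq : ∀ t ∈ Set.Ioi (0:ℝ),
      |(-Real.exp (-t))| • ((fun x : ℝ => x ^ n * (-Real.log x) ^ p) (Real.exp (-t)))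
      = t ^ (((p:ℝ)+1) - 1) * Real.exp (-(((n:ℝ)+1) * t)) := by
    intro t ht
    rw [Set.mem_Ioi] at ht
    rw [smul_eq_mul, abs_neg, abs_of_pos (Real.exp_pos _)]
    simp only [Real.log_exp, neg_neg]
    rw [add_sub_cancel_right, Real.rpow_natCast, ← Real.exp_nat_mul]
    rw [show (-(((n:ℝ)+1) * t)) = (-t) + (n:ℝ)*(-t) by ring, Real.exp_add]
    ring
  rw [setIntegral_congr_fun measurableSet_Ioi heq,
    integral_rpow_mul_exp_neg_mul_Ioi (by positivity) (by positivity)]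
  rw [Real.Gamma_nat_eq_factorial,
    show ((p:ℝ)+1) = ((p+1:ℕ):ℝ) by push_cast; ring, Real.rpow_natCast,
    div_pow, one_pow]
  ring

theorem stmt15 (β : ℝ) (h : |β| ≤ 1) (p : ℕ) :
    ∫ x in (0:ℝ)..1, (Real.log x) ^ p * Real.log (1 - β * x) / x =
      (-1) ^ (p + 1) * (Nat.factorial p : ℝ) * Li (p + 2) β := by
  set c : ℕ → ℝ := fun n => (-1:ℝ)^(p+1) * β^(n+1) / ((n:ℝ)+1) with hc
  set F : ℕ → ℝ → ℝ := fun n x => c n * (x ^ n * (-Real.log x) ^ p) with hF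
  have hint : ∀ n, Integrable (F n) (volume.restrict (Set.Ioo (0:ℝ) 1)) :=
    fun n => (key_integrable n p).const_mul _
  have hcle : ∀ n, |c n| ≤ 1 / ((n:ℝ)+1) := by
    intro n
    rw [hc]
    simp only
    rw [abs_div, abs_mul, abs_pow, abs_pow, abs_neg, abs_one, one_pow, one_mul,
      abs_of_pos (by positivity : (0:ℝ) < (n:ℝ)+1)]
    apply div_le_div_of_nonneg_right ?_ (by positivity)
    · exact pow_le_one₀ (abs_nonneg _) h
  have hnorm : ∀ n, ∫ x in Set.Ioo (0:ℝ) 1, ‖F n x‖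
      = |c n| * ((p.factorial : ℝ) / ((n:ℝ)+1)^(p+1)) := by
    intro n
    rw [← key_integral n p, ← integral_const_mul]
    apply setIntegral_congr_fun measurableSet_Ioo
    intro x hx
    rw [hF]
    simp only
    rw [Real.norm_eq_abs, abs_mul]
    congr 1
    have hlog : 0 ≤ -Real.log x := by
      simpa using (Real.log_nonpos hx.1.le hx.2.le)
    exact abs_of_nonneg (mul_nonneg (pow_nonneg hx.1.le n) (pow_nonneg hlog p))
  have hsum : Summable fun n => ∫ x in Set.Ioo (0:ℝ) 1, ‖F n x‖ := by
    simp only [hnorm]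
    have hbs : Summable (fun n : ℕ => (p.factorial : ℝ) * (1/((n:ℝ)+1)^(p+2))) := by
      apply Summable.mul_left
      have := (summable_nat_add_iff 1).mpr
        ((Real.summable_one_div_nat_pow (p := p+2)).mpr (by omega))
      apply this.congr
      intro n
      push_cast
      ring
    apply Summable.of_nonneg_of_le
      (fun n => mul_nonneg (abs_nonneg _) (by positivity)) (fun n => ?_) hbs
    · calc |c n| * ((p.factorial : ℝ) / ((n:ℝ)+1)^(p+1))
          ≤ (1/((n:ℝ)+1)) * ((p.factorial : ℝ) / ((n:ℝ)+1)^(p+1)) := by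
            apply mul_le_mul_of_nonneg_right (hcle n) (by positivity)
        _ = (p.factorial : ℝ) * (1/((n:ℝ)+1)^(p+2)) := by
            rw [pow_succ ((n:ℝ)+1) (p+1)]
            simp only [one_div, mul_inv, div_eq_mul_inv]
            ring
  have hpt : ∀ x ∈ Set.Ioo (0:ℝ) 1,
      (Real.log x) ^ p * Real.log (1 - β * x) / x = ∑' n, F n x := by
    intro x hx
    have hx0 : x ≠ 0 := ne_of_gt hx.1
    have hbx : |β * x| < 1 := by
      rw [abs_mul]
      calc |β| * |x| ≤ 1 * |x| := mul_le_mul_of_nonneg_right h (abs_nonneg _)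
        _ = |x| := one_mul _
        _ < 1 := by rw [abs_of_pos hx.1]; exact hx.2
    have hs := (Real.hasSum_pow_div_log_of_abs_lt_one hbx).mul_left
      (-((Real.log x)^p / x))
    have hterm : ∀ n : ℕ,
        (-((Real.log x)^p / x)) * ((β*x)^(n+1)/((n:ℝ)+1)) = F n x := by
      intro n
      rw [hF, hc]
      simp only [neg_pow (Real.log x), mul_pow, pow_succ x n]
      rcases Nat.even_or_odd p with hp | hp
      · rw [Even.neg_one_pow hp, Odd.neg_one_pow (Even.add_one hp)]
        field_simp
      · rw [Odd.neg_one_pow hp, Even.neg_one_pow (Odd.add_one hp)]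
        field_simp
    calc (Real.log x) ^ p * Real.log (1 - β * x) / x
        = (-((Real.log x)^p / x)) * (-Real.log (1 - β * x)) := by ring
      _ = ∑' n : ℕ, (-((Real.log x)^p / x)) * ((β*x)^(n+1)/((n:ℝ)+1)) := hs.tsum_eq.symm
      _ = ∑' n : ℕ, F n x := tsum_congr (fun n => hterm n)
  rw [intervalIntegral.integral_of_le zero_le_one,
    MeasureTheory.integral_Ioc_eq_integral_Ioo,
    setIntegral_congr_fun measurableSet_Ioo hpt,
    ← integral_tsum_of_summable_integral_norm hint hsum]
  have hval : ∀ n, ∫ x in Set.Ioo (0:ℝ) 1, F n x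
      = ((-1:ℝ)^(p+1) * (p.factorial : ℝ)) * (β^(n+1)/((n:ℝ)+1)^(p+2)) := by
    intro n
    rw [hF]
    simp only
    rw [integral_const_mul, key_integral n p, hc]
    simp only
    rw [pow_succ ((n:ℝ)+1) (p+1)]
    field_simp
  calc ∑' n, ∫ x in Set.Ioo (0:ℝ) 1, F n x
      = ∑' n : ℕ, ((-1:ℝ)^(p+1) * (p.factorial : ℝ)) * (β^(n+1)/((n:ℝ)+1)^(p+2)) :=
        tsum_congr hval
    _ = (-1) ^ (p + 1) * (Nat.factorial p : ℝ) * Li (p + 2) β := by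
        rw [tsum_mul_left, Li]
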